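/- Let M be a compact metric space and φ:ℝ×M→M a continuous flow without fixed points. If φ is separating, then φ has a quasi-trivial centralizer: for every continuous flow ψ:ℝ×M→M commuting with φ (i.e. ψ_s∘φ_t = φ_t∘ψ_s for all s,t∈ℝ), there exists a continuous function A:M→ℝ with A(φ_t(x)) = A(x) for all x∈M, t∈ℝ, such that ψ_t(x) = φ_{A(x)t}(x) for all x∈M and t∈ℝ. -/

import Mathlib

open Filter Topology Set

set_option linter.unusedSectionVars false
section Aux
variable {M : Type*} [MetricSpace M] [CompactSpace M]

private lemma aux_tendsto {F : ℝ → M → M} (hc : Continuous fun p : ℝ × M => F p.1 p.2)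
    {t : ℕ → ℝ} {z : ℕ → M} {t₀ : ℝ} {z₀ : M}
    (ht : Tendsto t atTop (𝓝 t₀)) (hz : Tendsto z atTop (𝓝 z₀)) :
    Tendsto (fun n => F (t n) (z n)) atTop (𝓝 (F t₀ z₀)) :=
  (hc.tendsto (t₀, z₀)).comp (ht.prodMk_nhds hz)

private lemma aux_ratseq (α : ℝ) :
    ∃ u : ℕ → ℚ, Tendsto (fun n => (u n : ℝ)) atTop (𝓝 α) := by
  have h : ∀ n : ℕ, ∃ q : ℚ, α < (q:ℝ) ∧ (q:ℝ) < α + 1/(n+1) := by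
    intro n
    exact exists_rat_btwn (by positivity |> fun h => lt_add_of_pos_right α h)
  choose u hu1 hu2 using h
  refine ⟨u, ?_⟩
  rw [← tendsto_sub_nhds_zero_iff]
  apply squeeze_zero_norm (a := fun n : ℕ => 1/(n+1)) ?_ tendsto_one_div_add_atTop_nhds_zero_nat
  intro n
  rw [Real.norm_eq_abs, abs_of_pos (by linarith [hu1 n])]
  linarith [hu2 n]

private lemma aux_unif {F : ℝ → M → M} (hc : Continuous fun p : ℝ × M => F p.1 p.2)
    (h0 : ∀ z, F 0 z = z) {ε : ℝ} (hε : 0 < ε) :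
    ∃ s₀ > 0, ∀ s : ℝ, |s| ≤ s₀ → ∀ z, dist (F s z) z < ε := by
  by_contra h
  push_neg at h
  have h' : ∀ n : ℕ, ∃ s : ℝ, |s| ≤ 1/(n+1) ∧ ∃ z, ε ≤ dist (F s z) z := by
    intro n
    obtain ⟨s, hs1, z, hz⟩ := h (1/(n+1)) (by positivity)
    exact ⟨s, hs1, z, hz⟩
  choose s hs z hz using h'
  obtain ⟨z₀, -, k, hk, hzk⟩ := isCompact_univ.tendsto_subseq (x := z) (fun n => mem_univ _)
  have hs0 : Tendsto (fun n => s (k n)) atTop (𝓝 0) := by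
    have h2 : Tendsto s atTop (𝓝 0) := by
      apply squeeze_zero_norm (a := fun n : ℕ => 1/(n+1)) ?_ tendsto_one_div_add_atTop_nhds_zero_nat
      intro n; rw [Real.norm_eq_abs]; exact hs n
    exact h2.comp hk.tendsto_atTop
  have hlim : Tendsto (fun n => dist (F (s (k n)) (z (k n))) (z (k n))) atTop
      (𝓝 (dist (F 0 z₀) z₀)) := (aux_tendsto hc hs0 hzk).dist hzk
  rw [h0 z₀, dist_self] at hlim
  have : ε ≤ 0 := le_of_tendsto_of_tendsto' tendsto_const_nhds hlim (fun n => hz (k n))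
  linarith


variable {φ ψ : ℝ → M → M}

private lemma aux_zmul (hφ0 : ∀ x, φ 0 x = x)
    (hφadd : ∀ t s x, φ (t + s) x = φ t (φ s x))
    (hψ0 : ∀ x, ψ 0 x = x) (hψadd : ∀ t s x, ψ (t + s) x = ψ t (ψ s x))
    (hcomm : ∀ s t : ℝ, ∀ x : M, ψ s (φ t x) = φ t (ψ s x))
    {x : M} {u τ : ℝ} (h : ψ u x = φ τ x) (m : ℤ) :
    ψ ((m : ℝ) * u) x = φ ((m : ℝ) * τ) x := by
  have hneg : ψ (-u) x = φ (-τ) x := by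
    have h1 : ψ (-u) (ψ u x) = x := by rw [← hψadd]; simp [hψ0]
    rw [h, hcomm] at h1
    have h2 := congrArg (φ (-τ)) h1
    rwa [← hφadd, neg_add_cancel, hφ0] at h2
  have hstep : ∀ (v σ : ℝ), ψ v x = φ σ x → ∀ n : ℕ,
      ψ ((n : ℝ) * v) x = φ ((n : ℝ) * σ) x := by
    intro v σ hv n
    induction n with
    | zero => simp [hψ0, hφ0]
    | succ n ih =>
        have e : ((n + 1 : ℕ) : ℝ) * v = v + (n : ℝ) * v := by push_cast; ring
        have e' : ((n + 1 : ℕ) : ℝ) * σ = (n : ℝ) * σ + σ := by push_cast; ring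
        rw [e, e', hψadd, ih, hcomm, hv, ← hφadd]
  rcases le_or_gt 0 m with hm | hm
  · lift m to ℕ using hm
    exact_mod_cast hstep u τ h m
  · obtain ⟨n, rfl⟩ : ∃ n : ℕ, m = -(n : ℤ) := ⟨m.natAbs, by omega⟩
    have := hstep (-u) (-τ) hneg n
    push_cast
    convert this using 2 <;> push_cast <;> ring

private lemma aux_T0 (hφcont : Continuous fun p : ℝ × M => φ p.1 p.2)
    (hφ0 : ∀ x, φ 0 x = x)
    (hφadd : ∀ t s x, φ (t + s) x = φ t (φ s x))
    (hnofix : ∀ x : M, ∃ t : ℝ, φ t x ≠ x) :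
    ∃ T > (0:ℝ), ∀ (x : M) (t : ℝ), 0 < |t| → |t| ≤ T → φ t x ≠ x := by
  have hφcomm : ∀ s t : ℝ, ∀ x : M, φ s (φ t x) = φ t (φ s x) := by
    intro s t x; rw [← hφadd, add_comm, hφadd]
  by_contra h
  push_neg at h
  have h' : ∀ n : ℕ, ∃ (x : M) (t : ℝ), 0 < |t| ∧ |t| ≤ 1/(n+1) ∧ φ t x = x := by
    intro n
    obtain ⟨x, t, h1, h2, h3⟩ := h (1/(n+1)) (by positivity)
    exact ⟨x, t, h1, h2, h3⟩
  choose x t ht1 ht2 ht3 using h'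
  obtain ⟨x₀, -, k, hk, hxk⟩ := isCompact_univ.tendsto_subseq (x := x) (fun n => mem_univ _)
  refine absurd (hnofix x₀) ?_
  push_neg
  intro T
  have htne : ∀ n, t n ≠ 0 := fun n => abs_pos.mp (ht1 n)
  set m : ℕ → ℤ := fun n => round (T / t (k n)) with hm
  have hbound : ∀ n : ℕ, |(m n : ℝ) * t (k n) - T| ≤ 1/(n+1) := by
    intro n
    have e : (m n : ℝ) * t (k n) - T =
        ((round (T / t (k n)) : ℝ) - T / t (k n)) * t (k n) := by
      rw [sub_mul, div_mul_cancel₀ _ (htne (k n))]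
    rw [e, abs_mul, abs_sub_comm]
    have h1 : |T / t (k n) - (round (T / t (k n)) : ℝ)| ≤ 1/2 := abs_sub_round _
    have h2 : |t (k n)| ≤ 1/((n:ℝ)+1) := by
      refine (ht2 (k n)).trans ?_
      have hkn : (n:ℝ) + 1 ≤ (k n : ℝ) + 1 := by
        have h3 : n ≤ k n := hk.le_apply
        push_cast
        exact_mod_cast Nat.succ_le_succ h3
      apply one_div_le_one_div_of_le (by positivity) hkn
    calc |T / t (k n) - (round (T / t (k n)) : ℝ)| * |t (k n)|
        ≤ (1/2) * (1/((n:ℝ)+1)) := by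
          apply mul_le_mul h1 h2 (abs_nonneg _) (by norm_num)
      _ ≤ 1/((n:ℝ)+1) := by
          rw [div_mul_eq_mul_div, one_mul]
          have : (0:ℝ) < (n:ℝ)+1 := by positivity
          rw [div_div]
          gcongr
          linarith
  have hmt : Tendsto (fun n => (m n : ℝ) * t (k n)) atTop (𝓝 T) := by
    rw [← tendsto_sub_nhds_zero_iff]
    apply squeeze_zero_norm (a := fun n : ℕ => 1/(n+1)) ?_
      tendsto_one_div_add_atTop_nhds_zero_nat
    intro n; rw [Real.norm_eq_abs]; exact hbound n
  have hfix : ∀ n, φ ((m n : ℝ) * t (k n)) (x (k n)) = x (k n) := by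
    intro n
    have h0 : φ (t (k n)) (x (k n)) = φ 0 (x (k n)) := by rw [hφ0]; exact ht3 (k n)
    have := aux_zmul hφ0 hφadd hφ0 hφadd hφcomm h0 (m n)
    simpa [hφ0] using this
  have hl1 : Tendsto (fun n => φ ((m n : ℝ) * t (k n)) (x (k n))) atTop (𝓝 (φ T x₀)) :=
    aux_tendsto hφcont hmt hxk
  have hl2 : Tendsto (fun n => φ ((m n : ℝ) * t (k n)) (x (k n))) atTop (𝓝 x₀) := by
    simp only [hfix]; exact hxk
  exact tendsto_nhds_unique hl1 hl2


private lemma aux_exist (hφcont : Continuous fun p : ℝ × M => φ p.1 p.2)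
    (hφ0 : ∀ x, φ 0 x = x)
    (hφadd : ∀ t s x, φ (t + s) x = φ t (φ s x))
    (hsep : ∃ δ > (0:ℝ), ∀ x y : M, (∀ t : ℝ, dist (φ t x) (φ t y) < δ) →
      ∃ s : ℝ, φ s x = y)
    (hψcont : Continuous fun p : ℝ × M => ψ p.1 p.2)
    (hψ0 : ∀ x, ψ 0 x = x)
    (hψadd : ∀ t s x, ψ (t + s) x = ψ t (ψ s x))
    (hcomm : ∀ s t : ℝ, ∀ x : M, ψ s (φ t x) = φ t (ψ s x))
    (x : M) (s : ℝ) : ∃ τ : ℝ, ψ s x = φ τ x := by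
  obtain ⟨δ, hδ, hsep'⟩ := hsep
  obtain ⟨s₀, hs₀, hunif⟩ := aux_unif hψcont hψ0 hδ
  have single : ∀ (z : M) (u : ℝ), |u| ≤ s₀ → ∃ τ, ψ u z = φ τ z := by
    intro z u hu
    obtain ⟨τ, hτ⟩ := hsep' z (ψ u z) (fun t => by
      rw [← hcomm, dist_comm]
      exact hunif u hu (φ t z))
    exact ⟨τ, hτ.symm⟩
  have iterate : ∀ (u : ℝ), |u| ≤ s₀ → ∀ n : ℕ, ∃ τ, ψ ((n:ℝ) * u) x = φ τ x := by
    intro u hu n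
    induction n with
    | zero => exact ⟨0, by simp [hψ0, hφ0]⟩
    | succ n ih =>
        obtain ⟨τ, hτ⟩ := ih
        obtain ⟨τ₁, hτ₁⟩ := single x u hu
        refine ⟨τ + τ₁, ?_⟩
        have e : ((n + 1 : ℕ) : ℝ) * u = u + (n:ℝ) * u := by push_cast; ring
        rw [e, hψadd, hτ, hcomm, hτ₁, ← hφadd]
  rcases eq_or_ne s 0 with rfl | hs
  · exact ⟨0, by simp [hψ0, hφ0]⟩
  · obtain ⟨n, hn⟩ := exists_nat_gt (|s| / s₀)
    have hn0 : 0 < (n:ℝ) := lt_of_le_of_lt (by positivity) hn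
    have hu : |s / n| ≤ s₀ := by
      rw [abs_div, abs_of_pos hn0]
      rw [div_le_iff₀ hn0]
      rw [div_lt_iff₀ hs₀] at hn
      linarith
    obtain ⟨τ, hτ⟩ := iterate (s / n) hu n
    refine ⟨τ, ?_⟩
    rw [← hτ]
    congr 1
    field_simp

private lemma aux_E (hφcont : Continuous fun p : ℝ × M => φ p.1 p.2)
    (hφ0 : ∀ x, φ 0 x = x)
    (hφadd : ∀ t s x, φ (t + s) x = φ t (φ s x))
    (hnofix : ∀ x : M, ∃ t : ℝ, φ t x ≠ x)
    (hsep : ∃ δ > (0:ℝ), ∀ x y : M, (∀ t : ℝ, dist (φ t x) (φ t y) < δ) →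
      ∃ s : ℝ, φ s x = y)
    (hψcont : Continuous fun p : ℝ × M => ψ p.1 p.2)
    (hψ0 : ∀ x, ψ 0 x = x)
    (hψadd : ∀ t s x, ψ (t + s) x = ψ t (ψ s x))
    (hcomm : ∀ s t : ℝ, ∀ x : M, ψ s (φ t x) = φ t (ψ s x))
    (x : M) : ∃ a : ℝ, ∀ s : ℝ, ψ s x = φ (a * s) x := by
  have hφcomm : ∀ s t : ℝ, ∀ x : M, φ s (φ t x) = φ t (φ s x) := by
    intro s t x; rw [← hφadd, add_comm, hφadd]
  have hexist : ∀ s : ℝ, ∃ τ : ℝ, ψ s x = φ τ x :=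
    fun s => aux_exist hφcont hφ0 hφadd hsep hψcont hψ0 hψadd hcomm x s
  let P : AddSubgroup ℝ :=
  { carrier := {τ : ℝ | φ τ x = x}
    add_mem' := fun {u v} hu hv => by
      simp only [Set.mem_setOf_eq] at *
      rw [hφadd, hv, hu]
    zero_mem' := hφ0 x
    neg_mem' := fun {u} hu => by
      simp only [Set.mem_setOf_eq] at *
      calc φ (-u) x = φ (-u) (φ u x) := by rw [hu]
        _ = x := by rw [← hφadd, neg_add_cancel, hφ0] }
  rcases P.dense_or_cyclic with hdense | ⟨a, hPa⟩
  · exfalso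
    obtain ⟨t, ht⟩ := hnofix x
    have hcl : IsClosed (P : Set ℝ) := by
      have hcφ : Continuous fun τ : ℝ => φ τ x :=
        hφcont.comp (continuous_id.prodMk continuous_const)
      exact isClosed_eq hcφ continuous_const
    have huniv : (P : Set ℝ) = Set.univ := by
      rw [← hcl.closure_eq, hdense.closure_eq]
    exact ht (Set.eq_univ_iff_forall.mp huniv t)
  · have hPmem : ∀ τ : ℝ, φ τ x = x → ∃ k : ℤ, τ = (k:ℝ) * a := by
      intro τ hτ
      have hm : τ ∈ P := hτ
      rw [hPa, AddSubgroup.mem_closure_singleton] at hm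
      obtain ⟨k, hk⟩ := hm
      exact ⟨k, by rw [← hk, zsmul_eq_mul]⟩
    have hamem : φ a x = x := by
      have hm : a ∈ P := by
        rw [hPa]
        exact AddSubgroup.mem_closure_singleton.mpr ⟨1, one_zsmul a⟩
      exact hm
    have hka : ∀ k : ℤ, φ ((k:ℝ) * a) x = x := by
      intro k
      have h0 : φ a x = φ 0 x := by rw [hφ0]; exact hamem
      have := aux_zmul hφ0 hφadd hφ0 hφadd hφcomm h0 k
      simpa [hφ0] using this
    rcases eq_or_ne a 0 with rfl | ha
    -- Case A : trivial period group
    · have hP0 : ∀ τ : ℝ, φ τ x = x → τ = 0 := by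
        intro τ hτ
        obtain ⟨k, hk⟩ := hPmem τ hτ
        simpa using hk
      set f : ℝ → ℝ := fun s => Classical.choose (hexist s) with hfdef
      have hf : ∀ s, ψ s x = φ (f s) x := fun s => Classical.choose_spec (hexist s)
      have huniq : ∀ s τ, ψ s x = φ τ x → τ = f s := by
        intro s τ hτ
        have h1 : φ τ x = φ (f s) x := by rw [← hτ, hf]
        have h2 := congrArg (φ (-f s)) h1
        rw [← hφadd, ← hφadd, neg_add_cancel, hφ0] at h2
        have h3 := hP0 _ h2
        linarith
      have haddf : ∀ s s', f (s + s') = f s + f s' := by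
        intro s s'
        refine (huniq (s + s') (f s + f s') ?_).symm
        rw [hψadd, hf s', hcomm, hf s, ← hφadd, add_comm (f s') (f s)]
      have hzf : ∀ (m : ℤ) (s : ℝ), f ((m:ℝ) * s) = (m:ℝ) * f s := by
        intro m s
        exact (huniq _ _ (aux_zmul hφ0 hφadd hψ0 hψadd hcomm (hf s) m)).symm
      have hdivf : ∀ (n : ℕ), 0 < n → ∀ s : ℝ, f (s / n) = f s / n := by
        intro n hn s
        have hne : ((n:ℝ)) ≠ 0 := by positivity
        have e : ((n:ℤ):ℝ) * (s / n) = s := by push_cast; field_simp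
        have h2 := hzf (n:ℤ) (s / n)
        rw [e] at h2
        rw [h2]
        push_cast
        field_simp
      have hqf : ∀ (q : ℚ) (s : ℝ), f ((q:ℝ) * s) = (q:ℝ) * f s := by
        intro q s
        have hden : 0 < q.den := q.den_pos
        have hdne : ((q.den : ℝ)) ≠ 0 := by positivity
        have e : (q:ℝ) * s = ((q.num : ℤ):ℝ) * (s / (q.den:ℕ)) := by
          rw [Rat.cast_def]
          push_cast
          field_simp
        rw [e, hzf, hdivf q.den hden, Rat.cast_def]
        push_cast
        field_simp
      by_cases hlin : ∀ s : ℝ, f s = f 1 * s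
      · exact ⟨f 1, fun s => by rw [hf s, hlin s]⟩
      · exfalso
        push_neg at hlin
        obtain ⟨s₂, hs₂⟩ := hlin
        have hdet : f s₂ - f 1 * s₂ ≠ 0 := sub_ne_zero.mpr hs₂
        set β : ℝ := 1 / (f s₂ - f 1 * s₂) with hβ
        set α : ℝ := -β * s₂ with hα
        obtain ⟨q, hq⟩ := aux_ratseq α
        obtain ⟨r, hr⟩ := aux_ratseq β
        set z : ℕ → ℝ := fun n => (q n : ℝ) + (r n : ℝ) * s₂ with hzdef
        have hfz : ∀ n, f (z n) = (q n : ℝ) * f 1 + (r n : ℝ) * f s₂ := by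
          intro n
          have e1 : f ((q n : ℝ)) = (q n : ℝ) * f 1 := by
            rw [show ((q n : ℝ)) = ((q n : ℝ)) * 1 from (mul_one _).symm, hqf]
            ring
          rw [show z n = (q n : ℝ) + (r n : ℝ) * s₂ from rfl, haddf, e1, hqf]
        have hz0 : Tendsto z atTop (𝓝 0) := by
          have h2 := hq.add (hr.mul_const s₂)
          have e : α + β * s₂ = 0 := by rw [hα]; ring
          rwa [e] at h2
        have hfz1 : Tendsto (fun n => f (z n)) atTop (𝓝 1) := by
          have h2 := (hq.mul_const (f 1)).add (hr.mul_const (f s₂))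
          have e : α * f 1 + β * f s₂ = 1 := by
            rw [hα, hβ]; field_simp; ring
          rw [e] at h2
          have heq : (fun n => f (z n)) = fun n => (q n : ℝ) * f 1 + (r n : ℝ) * f s₂ :=
            funext fun n => hfz n
          rw [heq]
          exact h2
        have hl1 : Tendsto (fun n => ψ (z n) x) atTop (𝓝 x) := by
          have h2 := aux_tendsto hψcont hz0 (tendsto_const_nhds (x := x))
          simpa [hψ0] using h2
        have hl2 : Tendsto (fun n => ψ (z n) x) atTop (𝓝 (φ 1 x)) := by
          have h2 := aux_tendsto hφcont hfz1 (tendsto_const_nhds (x := x))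
          have heq : (fun n => φ (f (z n)) x) = fun n => ψ (z n) x :=
            funext fun n => (hf (z n)).symm
          rwa [heq] at h2
        have : φ 1 x = x := tendsto_nhds_unique hl2 hl1
        exact one_ne_zero (hP0 1 this)
    -- Case B : cyclic period group with positive generator
    · set p : ℝ := |a| with hp
      have hp0 : 0 < p := abs_pos.mpr ha
      have hE : ∃ s₀ > (0:ℝ), ∀ s : ℝ, |s| ≤ s₀ → ∃ τ, |τ| ≤ p/8 ∧ ψ s x = φ τ x := by
        by_contra hcon
        push_neg at hcon
        have h' : ∀ n : ℕ, ∃ s : ℝ, |s| ≤ 1/(n+1) ∧ ∀ τ, |τ| ≤ p/8 → ψ s x ≠ φ τ x := by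
          intro n
          obtain ⟨s, h1, h2⟩ := hcon (1/(n+1)) (by positivity)
          exact ⟨s, h1, h2⟩
        choose s hs1 hs2 using h'
        have hrep : ∀ n, ∃ τ, |τ| ≤ p/2 ∧ ψ (s n) x = φ τ x := by
          intro n
          obtain ⟨τ', hτ'⟩ := hexist (s n)
          set k : ℤ := round (τ' / a) with hkdef
          refine ⟨τ' - (k:ℝ) * a, ?_, ?_⟩
          · have e : τ' - (k:ℝ)*a = (τ'/a - (k:ℝ)) * a := by
              rw [sub_mul, div_mul_cancel₀ _ ha]
            rw [e, abs_mul]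
            have h1 : |τ'/a - (k:ℝ)| ≤ 1/2 := abs_sub_round _
            calc |τ'/a - (k:ℝ)| * |a| ≤ (1/2) * |a| :=
                mul_le_mul_of_nonneg_right h1 (abs_nonneg a)
              _ = p/2 := by rw [hp]; ring
          · rw [hτ']
            have hk0 : φ (-((k:ℝ)*a)) x = x := by
              calc φ (-((k:ℝ)*a)) x = φ (-((k:ℝ)*a)) (φ ((k:ℝ)*a) x) := by rw [hka k]
                _ = x := by rw [← hφadd, neg_add_cancel, hφ0]
            calc φ τ' x = φ τ' (φ (-((k:ℝ)*a)) x) := by rw [hk0]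
              _ = φ (τ' + -((k:ℝ)*a)) x := (hφadd _ _ _).symm
              _ = φ (τ' - (k:ℝ)*a) x := by rw [← sub_eq_add_neg]
        choose τ hτ1 hτ2 using hrep
        have hτmem : ∀ n, τ n ∈ Icc (-(p/2)) (p/2) := fun n => abs_le.mp (hτ1 n)
        obtain ⟨τ₀, hτ₀mem, k, hk, hτk⟩ := isCompact_Icc.tendsto_subseq hτmem
        have hslim : Tendsto (fun n => s (k n)) atTop (𝓝 0) := by
          have h2 : Tendsto s atTop (𝓝 0) := by
            apply squeeze_zero_norm (a := fun n : ℕ => 1/(n+1)) ?_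
              tendsto_one_div_add_atTop_nhds_zero_nat
            intro n; rw [Real.norm_eq_abs]; exact hs1 n
          exact h2.comp hk.tendsto_atTop
        have hψlim : Tendsto (fun n => ψ (s (k n)) x) atTop (𝓝 x) := by
          have h2 := aux_tendsto hψcont hslim (tendsto_const_nhds (x := x))
          simpa [hψ0] using h2
        have hφlim : Tendsto (fun n => ψ (s (k n)) x) atTop (𝓝 (φ τ₀ x)) := by
          have h2 := aux_tendsto hφcont hτk (tendsto_const_nhds (x := x))
          have heq : (fun n => φ ((τ ∘ k) n) x) = fun n => ψ (s (k n)) x :=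
            funext fun n => (hτ2 (k n)).symm
          rwa [heq] at h2
        have hfix : φ τ₀ x = x := tendsto_nhds_unique hφlim hψlim
        obtain ⟨j, hj⟩ := hPmem τ₀ hfix
        have hlow : p/8 ≤ |τ₀| := by
          have habs : Tendsto (fun n => |(τ ∘ k) n|) atTop (𝓝 |τ₀|) := hτk.abs
          refine le_of_tendsto_of_tendsto' tendsto_const_nhds habs (fun n => ?_)
          by_contra hle
          push_neg at hle
          exact hs2 (k n) (τ (k n)) (le_of_lt hle) (hτ2 (k n))
        have hupper : |τ₀| ≤ p/2 := abs_le.mpr ⟨hτ₀mem.1, hτ₀mem.2⟩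
        rcases eq_or_ne j 0 with rfl | hj0
        · rw [hj] at hlow
          simp at hlow
          linarith
        · have h4 : p ≤ |τ₀| := by
            rw [hj, abs_mul]
            have h5 : (1:ℝ) ≤ |(j:ℝ)| := by
              have := Int.one_le_abs hj0
              exact_mod_cast this
            nlinarith [abs_nonneg a, hp0]
          linarith
      obtain ⟨s₀, hs₀, hsmall⟩ := hE
      have UB : ∀ s τ τ' : ℝ, ψ s x = φ τ x → ψ s x = φ τ' x →
          |τ| ≤ p/4 → |τ'| ≤ p/4 → τ = τ' := by
        intro s τ τ' h1 h2 hb1 hb2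
        have h3 : φ τ' x = φ τ x := by rw [← h1, ← h2]
        have h4 := congrArg (φ (-τ)) h3
        rw [← hφadd, ← hφadd, neg_add_cancel, hφ0] at h4
        obtain ⟨j, hj⟩ := hPmem _ h4
        rcases eq_or_ne j 0 with rfl | hj0
        · simp at hj; linarith
        · exfalso
          have h5 : p ≤ |-τ + τ'| := by
            rw [hj, abs_mul]
            have h6 : (1:ℝ) ≤ |(j:ℝ)| := by
              have := Int.one_le_abs hj0
              exact_mod_cast this
            nlinarith [abs_nonneg a, hp0]
          have h7 : |-τ + τ'| ≤ p/2 := by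
            have h8 := abs_add_le (-τ) τ'
            rw [abs_neg] at h8
            linarith
          linarith
      have hdy : ∀ n : ℕ, |s₀ / 2^n| ≤ s₀ := by
        intro n
        rw [abs_of_pos (by positivity)]
        apply div_le_self (le_of_lt hs₀)
        exact one_le_pow₀ one_le_two
      choose c hc1 hc2 using fun n : ℕ => hsmall (s₀ / 2^n) (hdy n)
      have hhalf : ∀ n, c n = 2 * c (n+1) := by
        intro n
        have e : s₀/2^n = s₀/2^(n+1) + s₀/2^(n+1) := by ring
        have h2 : ψ (s₀/2^n) x = φ (2 * c (n+1)) x := by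
          rw [two_mul, e, hψadd, hc2 (n+1), hcomm, hc2 (n+1), ← hφadd]
        refine UB _ _ _ (hc2 n) h2 ?_ ?_
        · linarith [hc1 n, hp0]
        · rw [abs_mul, abs_two]
          linarith [hc1 (n+1), hp0]
      have hcn : ∀ n, c n = c 0 / 2^n := by
        intro n
        induction n with
        | zero => simp
        | succ n ih =>
            have h2 := hhalf n
            rw [ih] at h2
            have h3 : (2:ℝ)^(n+1) = 2^n * 2 := by ring
            rw [h3]
            have h4 : (0:ℝ) < 2^n := by positivity
            field_simp at h2 ⊢
            linarith
      set a₀ : ℝ := c 0 / s₀ with ha₀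
      have hca : ∀ n, c n = a₀ * (s₀ / 2^n) := by
        intro n
        rw [hcn n, ha₀]
        field_simp
      have key : ∀ (m : ℤ) (n : ℕ),
          ψ ((m:ℝ) * (s₀/2^n)) x = φ (a₀ * ((m:ℝ) * (s₀/2^n))) x := by
        intro m n
        have h2 := aux_zmul hφ0 hφadd hψ0 hψadd hcomm (hc2 n) m
        rw [hca n] at h2
        convert h2 using 2
        ring
      refine ⟨a₀, fun t => ?_⟩
      set u : ℕ → ℝ := fun n => s₀ / 2^n with hu
      set m : ℕ → ℤ := fun n => round (t / u n) with hm
      have hupos : ∀ n, 0 < u n := fun n => by rw [hu]; positivity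
      have hmu : Tendsto (fun n => (m n : ℝ) * u n) atTop (𝓝 t) := by
        rw [← tendsto_sub_nhds_zero_iff]
        apply squeeze_zero_norm (a := fun n => u n) ?_ ?_
        · intro n
          rw [Real.norm_eq_abs]
          have hune : u n ≠ 0 := ne_of_gt (hupos n)
          have e : (m n:ℝ) * u n - t = ((round (t/u n) : ℝ) - t/u n) * u n := by
            rw [sub_mul, div_mul_cancel₀ _ hune, hm]
          rw [e, abs_mul, abs_sub_comm]
          calc |t/u n - (round (t/u n) : ℝ)| * |u n| ≤ (1/2) * |u n| :=
              mul_le_mul_of_nonneg_right (abs_sub_round _) (abs_nonneg _)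
            _ ≤ |u n| := by rw [abs_of_pos (hupos n)]; linarith [hupos n]
            _ = u n := abs_of_pos (hupos n)
        · have h2 : Tendsto (fun n : ℕ => s₀ * (1/2:ℝ)^n) atTop (𝓝 0) := by
            have h3 := (tendsto_pow_atTop_nhds_zero_of_lt_one
              (by norm_num : (0:ℝ) ≤ 1/2) (by norm_num : (1/2:ℝ) < 1)).const_mul s₀
            simpa using h3
          have heq : (fun n : ℕ => u n) = fun n : ℕ => s₀ * (1/2:ℝ)^n := by
            funext n
            rw [hu]
            rw [div_pow, one_pow]
            ring
          rw [heq]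
          exact h2
      have hl1 : Tendsto (fun n => ψ ((m n:ℝ) * u n) x) atTop (𝓝 (ψ t x)) :=
        aux_tendsto hψcont hmu (tendsto_const_nhds (x := x))
      have hl2 : Tendsto (fun n => ψ ((m n:ℝ) * u n) x) atTop (𝓝 (φ (a₀ * t) x)) := by
        have h3 : Tendsto (fun n => a₀ * ((m n:ℝ) * u n)) atTop (𝓝 (a₀ * t)) :=
          hmu.const_mul a₀
        have h4 := aux_tendsto hφcont h3 (tendsto_const_nhds (x := x))
        have heq : (fun n => φ (a₀ * ((m n:ℝ) * u n)) x) = fun n => ψ ((m n:ℝ) * u n) x :=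
          funext fun n => (key (m n) n).symm
        rwa [heq] at h4
      exact tendsto_nhds_unique hl1 hl2
end Aux

/-- A separating fixed-point-free continuous flow on a compact metric
space has a quasi-trivial centralizer. -/
theorem stmt_0 {M : Type*} [MetricSpace M] [CompactSpace M]
    (φ : ℝ → M → M)
    (hφcont : Continuous fun p : ℝ × M => φ p.1 p.2)
    (hφ0 : ∀ x, φ 0 x = x)
    (hφadd : ∀ t s x, φ (t + s) x = φ t (φ s x))
    (hnofix : ∀ x : M, ∃ t : ℝ, φ t x ≠ x)
    (hsep : ∃ δ > 0, ∀ x y : M, (∀ t : ℝ, dist (φ t x) (φ t y) < δ) →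
      ∃ s : ℝ, φ s x = y)
    (ψ : ℝ → M → M)
    (hψcont : Continuous fun p : ℝ × M => ψ p.1 p.2)
    (hψ0 : ∀ x, ψ 0 x = x)
    (hψadd : ∀ t s x, ψ (t + s) x = ψ t (ψ s x))
    (hcomm : ∀ s t : ℝ, ∀ x : M, ψ s (φ t x) = φ t (ψ s x)) :
    ∃ A : M → ℝ, Continuous A ∧ (∀ x : M, ∀ t : ℝ, A (φ t x) = A x) ∧
      ∀ x : M, ∀ t : ℝ, ψ t x = φ (A x * t) x := by
  classical
  rcases isEmpty_or_nonempty M with hM | hM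
  · exact ⟨fun _ => 0, continuous_const, fun x => (hM.false x).elim,
      fun x => (hM.false x).elim⟩
  have hEx : ∀ x : M, ∃ a : ℝ, ∀ s : ℝ, ψ s x = φ (a * s) x := fun x =>
    aux_E hφcont hφ0 hφadd hnofix hsep hψcont hψ0 hψadd hcomm x
  set A : M → ℝ := fun x => Classical.choose (hEx x) with hAdef
  have hAs : ∀ x s, ψ s x = φ (A x * s) x := fun x => Classical.choose_spec (hEx x)
  have U : ∀ (x : M) (b : ℝ), (∀ s, ψ s x = φ (b * s) x) → b = A x := by
    intro x b hb
    by_contra hne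
    have hdiff : ∀ s : ℝ, φ ((b - A x) * s) x = x := by
      intro s
      have h1 : φ (b * s) x = φ (A x * s) x := by rw [← hb s, hAs x s]
      have h2 := congrArg (φ (-(A x * s))) h1
      rw [← hφadd, ← hφadd, neg_add_cancel, hφ0] at h2
      have e : (b - A x) * s = -(A x * s) + b * s := by ring
      rw [e]
      exact h2
    obtain ⟨t, ht⟩ := hnofix x
    have hs : (b - A x) ≠ 0 := sub_ne_zero.mpr hne
    have h3 := hdiff (t / (b - A x))
    rw [mul_div_cancel₀ _ hs] at h3
    exact ht h3
  have hinv : ∀ (x : M) (t : ℝ), A (φ t x) = A x := by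
    intro x t
    have h1 : ∀ s, ψ s (φ t x) = φ (A x * s) (φ t x) := by
      intro s
      rw [hcomm, hAs x s, ← hφadd, ← hφadd, add_comm t (A x * s)]
    exact (U (φ t x) (A x) h1).symm
  obtain ⟨T₀, hT₀, hT⟩ := aux_T0 hφcont hφ0 hφadd hnofix
  have hc1 : Continuous fun z : M => dist (φ T₀ z) z :=
    (hφcont.comp (continuous_const.prodMk continuous_id)).dist continuous_id
  obtain ⟨z₀, -, hz₀⟩ := isCompact_univ.exists_isMinOn Set.univ_nonempty hc1.continuousOn
  set ρ₀ : ℝ := dist (φ T₀ z₀) z₀ with hρ₀def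
  have hρ₀ : 0 < ρ₀ := dist_pos.mpr
    (hT z₀ T₀ (by rw [abs_of_pos hT₀]; exact hT₀) (le_of_eq (abs_of_pos hT₀)))
  obtain ⟨s₀, hs₀, hunif⟩ := aux_unif hψcont hψ0 hρ₀
  have hbound : ∀ x : M, |A x| ≤ T₀ / s₀ := by
    intro x
    by_contra hgt
    push_neg at hgt
    have hAabs : 0 < |A x| := lt_of_le_of_lt (div_nonneg hT₀.le hs₀.le) hgt
    have hAne : A x ≠ 0 := abs_pos.mp hAabs
    set s : ℝ := T₀ / A x with hsdef
    have hsabs : |s| ≤ s₀ := by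
      rw [hsdef, abs_div, abs_of_pos hT₀, div_le_iff₀ hAabs]
      rw [div_lt_iff₀ hs₀] at hgt
      linarith
    have h1 : ψ s x = φ T₀ x := by
      rw [hAs x s, hsdef, mul_comm, div_mul_cancel₀ T₀ hAne]
    have h2 : dist (ψ s x) x < ρ₀ := hunif s hsabs x
    rw [h1] at h2
    exact absurd h2 (not_lt.mpr (hz₀ (Set.mem_univ x)))
  have hcont : Continuous A := by
    rw [continuous_iff_seqContinuous]
    intro v pt hv
    apply tendsto_of_subseq_tendsto
    intro ns hns
    have hmem : ∀ n, A (v (ns n)) ∈ Icc (-(T₀/s₀)) (T₀/s₀) :=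
      fun n => abs_le.mp (hbound _)
    obtain ⟨b, hbmem, ms, hms, hbk⟩ := isCompact_Icc.tendsto_subseq hmem
    have hbk' : Tendsto (fun n => A (v (ns (ms n)))) atTop (𝓝 b) := hbk
    refine ⟨ms, ?_⟩
    have hvlim : Tendsto (fun n => v (ns (ms n))) atTop (𝓝 pt) :=
      hv.comp (hns.comp hms.tendsto_atTop)
    have hb : ∀ s : ℝ, ψ s pt = φ (b * s) pt := by
      intro s
      have hl1 : Tendsto (fun n => ψ s (v (ns (ms n)))) atTop (𝓝 (ψ s pt)) :=
        aux_tendsto hψcont tendsto_const_nhds hvlim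
      have hl2 : Tendsto (fun n => ψ s (v (ns (ms n)))) atTop (𝓝 (φ (b * s) pt)) := by
        have h3 : Tendsto (fun n => A (v (ns (ms n))) * s) atTop (𝓝 (b * s)) :=
          hbk'.mul_const s
        have h4 := aux_tendsto hφcont h3 hvlim
        have heq : (fun n => φ (A (v (ns (ms n))) * s) (v (ns (ms n)))) =
            fun n => ψ s (v (ns (ms n))) := funext fun n => (hAs _ s).symm
        rwa [heq] at h4
      exact tendsto_nhds_unique hl1 hl2
    have hbA : b = A pt := U pt b hb
    rw [← hbA]
    exact hbk'
  exact ⟨A, hcont, hinv, fun x t => hAs x t⟩
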